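/- Let g : 2πℤ³ → ℂ be summable and define ǧ(x) = Σ_{p ∈ 2πℤ³} g(p) e^{i p·x} for x in the unit torus Λ = [-1/2, 1/2]³. Suppose g extends to a function G on ℝ³ whose partial derivative ∂_{p_j}^m G exists and is integrable along lines in direction e_j. Then there is a universal constant c > 0 (independent of g, m, x) such that c^m |x_j|^m |ǧ(x)| ≤ (2π)^{m-1} ∫_0^{2πm} Σ_{p ∈ 2πℤ³} |∂_{p_j}^m G(p - s e_j)| ds, for each coordinate direction j ∈ {1,2,3} and each m ≥ 1. -/

import Mathlib

open MeasureTheory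

/-- Partial derivative of `G : ℝ³ → ℂ` in the `j`-th coordinate direction. -/
noncomputable def pd (j : Fin 3) (G : (Fin 3 → ℝ) → ℂ) : (Fin 3 → ℝ) → ℂ :=
  fun x => fderiv ℝ G x (Pi.single j 1)

/-- The `j`-th standard basis vector of `ℝ³`. -/
def ej (j : Fin 3) : Fin 3 → ℝ := Pi.single j 1

open Real

noncomputable def Dd (ψ : ℝ → ℂ) : ℝ → ℂ := fun s => ψ (s + 2 * Real.pi) - ψ s

lemma contDiff_Dd {n : ℕ∞} {ψ : ℝ → ℂ} (h : ContDiff ℝ n ψ) : ContDiff ℝ n (Dd ψ) :=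
  (h.comp (contDiff_id.add contDiff_const)).sub h

lemma contDiff_Dd_iter {n : ℕ∞} {ψ : ℝ → ℂ} (m : ℕ) (h : ContDiff ℝ n ψ) :
    ContDiff ℝ n (Dd^[m] ψ) := by
  induction m with
  | zero => simpa using h
  | succ m ih => rw [Function.iterate_succ_apply']; exact contDiff_Dd ih

section calc1
variable {ψ : ℝ → ℂ}

lemma deriv_Dd (h : Differentiable ℝ ψ) : deriv (Dd ψ) = Dd (deriv ψ) := by
  funext s
  have h1 : DifferentiableAt ℝ (fun s : ℝ => ψ (s + 2 * Real.pi)) s :=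
    (h (s + 2 * Real.pi)).comp s ((differentiableAt_id).add_const _)
  show deriv (fun s => ψ (s + 2 * Real.pi) - ψ s) s = _
  rw [deriv_fun_sub h1 (h s), deriv_comp_add_const]
  rfl

lemma differentiable_Dd (h : Differentiable ℝ ψ) : Differentiable ℝ (Dd ψ) :=
  ((h.comp ((differentiable_id).add_const _))).sub h

lemma deriv_Dd_iter (n : ℕ) (h : Differentiable ℝ ψ) :
    deriv (Dd^[n] ψ) = Dd^[n] (deriv ψ) := by
  induction n generalizing ψ with
  | zero => simp
  | succ n ih =>
    rw [Function.iterate_succ_apply, Function.iterate_succ_apply,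
      ih (differentiable_Dd h), deriv_Dd h]

lemma contDiff_deriv {n : ℕ} (h : ContDiff ℝ (n + 1 : ℕ) ψ) :
    ContDiff ℝ (n : ℕ) (deriv ψ) := by
  have h' : ContDiff ℝ ((n : WithTop ℕ∞) + 1) ψ := by exact_mod_cast h
  exact (contDiff_succ_iff_deriv.mp h').2.2

lemma continuous_deriv_iter {n : ℕ} (h : ContDiff ℝ (n : ℕ) ψ) :
    Continuous (deriv^[n] ψ) := by
  induction n generalizing ψ with
  | zero => simpa using h.continuous
  | succ n ih =>
    rw [Function.iterate_succ_apply]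
    exact ih (contDiff_deriv h)

lemma ftc_step (h : ContDiff ℝ (1 : ℕ) ψ) (a : ℝ) :
    (‖ψ (a + 2 * Real.pi) - ψ a‖₊ : ENNReal) ≤
      ∫⁻ s in Set.Icc a (a + 2 * Real.pi), (‖deriv ψ s‖₊ : ENNReal) := by
  have hab : a ≤ a + 2 * Real.pi := by nlinarith [Real.pi_pos]
  have hd : Continuous (deriv ψ) := (contDiff_deriv (n := 0) h).continuous
  have heq : ∫ s in a..(a + 2 * Real.pi), deriv ψ s = ψ (a + 2 * Real.pi) - ψ a :=
    intervalIntegral.integral_deriv_eq_sub (fun x _ => (h.differentiable (by simp)) x)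
      (hd.intervalIntegrable _ _)
  have h1 : ‖ψ (a + 2 * Real.pi) - ψ a‖ ≤ ∫ s in a..(a + 2 * Real.pi), ‖deriv ψ s‖ := by
    rw [← heq]
    exact intervalIntegral.norm_integral_le_integral_norm hab
  have h2 : ∫ s in a..(a + 2 * Real.pi), ‖deriv ψ s‖
      = ∫ s in Set.Ioc a (a + 2 * Real.pi), ‖deriv ψ s‖ :=
    intervalIntegral.integral_of_le hab
  have h3 : ENNReal.ofReal (∫ s in Set.Ioc a (a + 2 * Real.pi), ‖deriv ψ s‖)
      = ∫⁻ s in Set.Ioc a (a + 2 * Real.pi), (‖deriv ψ s‖₊ : ENNReal) := by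
    rw [MeasureTheory.ofReal_integral_eq_lintegral_ofReal
      ((hd.norm.integrableOn_Icc).mono_set Set.Ioc_subset_Icc_self)
      (Filter.Eventually.of_forall fun s => norm_nonneg _)]
    simp [ofReal_norm_eq_enorm]; rfl
  calc (‖ψ (a + 2 * Real.pi) - ψ a‖₊ : ENNReal)
      = ENNReal.ofReal ‖ψ (a + 2 * Real.pi) - ψ a‖ := (ofReal_norm_eq_enorm _).symm
    _ ≤ ENNReal.ofReal (∫ s in Set.Ioc a (a + 2 * Real.pi), ‖deriv ψ s‖) :=
        ENNReal.ofReal_le_ofReal (h2 ▸ h1)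
    _ = ∫⁻ s in Set.Ioc a (a + 2 * Real.pi), (‖deriv ψ s‖₊ : ENNReal) := h3
    _ ≤ ∫⁻ s in Set.Icc a (a + 2 * Real.pi), (‖deriv ψ s‖₊ : ENNReal) :=
        lintegral_mono_set Set.Ioc_subset_Icc_self

end calc1

lemma claim : ∀ (m : ℕ), 1 ≤ m → ∀ (Φ : (Fin 3 → ℤ) → ℝ → ℂ),
    (∀ k, ContDiff ℝ (m : ℕ) (Φ k)) → ∀ (a : ℝ) (F : Finset (Fin 3 → ℤ)),
    ∑ k ∈ F, (‖Dd^[m] (Φ k) a‖₊ : ENNReal) ≤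
      (ENNReal.ofReal (2 * Real.pi))^(m - 1) *
        ∫⁻ s in Set.Icc a (a + 2 * Real.pi * m), ∑' k, (‖deriv^[m] (Φ k) s‖₊ : ENNReal) := by
  intro m
  induction m with
  | zero => omega
  | succ m ih =>
    intro _ Φ hΦ a F
    have hpi : (0:ℝ) < 2 * Real.pi := by positivity
    rcases Nat.eq_zero_or_pos m with h0 | hpos
    · -- base case m + 1 = 1
      subst h0
      simp only [zero_add, Function.iterate_one, Nat.cast_one, mul_one, pow_zero, one_mul,
        Nat.sub_self]
      have hmeas : ∀ k : Fin 3 → ℤ, Measurable (fun s => (‖deriv (Φ k) s‖₊ : ENNReal)) :=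
        fun k => ((contDiff_deriv (n := 0) (hΦ k)).continuous.measurable).nnnorm.coe_nnreal_ennreal
      calc ∑ k ∈ F, (‖Dd (Φ k) a‖₊ : ENNReal)
          ≤ ∑ k ∈ F, ∫⁻ s in Set.Icc a (a + 2 * Real.pi), (‖deriv (Φ k) s‖₊ : ENNReal) :=
            Finset.sum_le_sum fun k _ => ftc_step (hΦ k) a
        _ = ∫⁻ s in Set.Icc a (a + 2 * Real.pi), ∑ k ∈ F, (‖deriv (Φ k) s‖₊ : ENNReal) :=
            (lintegral_finset_sum' F fun k _ => (hmeas k).aemeasurable).symm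
        _ ≤ ∫⁻ s in Set.Icc a (a + 2 * Real.pi), ∑' k, (‖deriv (Φ k) s‖₊ : ENNReal) :=
            lintegral_mono fun s => ENNReal.sum_le_tsum F
    · -- inductive step
      have hΦ1 : ∀ k, ContDiff ℝ (1 : ℕ) (Dd^[m] (Φ k)) := fun k =>
        contDiff_Dd_iter m ((hΦ k).of_le (by exact_mod_cast Nat.le_add_left 1 m))
      have hdiff : ∀ k, Differentiable ℝ (Φ k) :=
        fun k => (hΦ k).differentiable (by simp)
      have hΦ' : ∀ k, ContDiff ℝ (m : ℕ) (deriv (Φ k)) := fun k => contDiff_deriv (hΦ k)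
      set C : ENNReal := (ENNReal.ofReal (2 * Real.pi))^(m - 1) *
        ∫⁻ s in Set.Icc a (a + 2 * Real.pi * ((m : ℝ) + 1)),
          ∑' k, (‖deriv^[m + 1] (Φ k) s‖₊ : ENNReal) with hC
      have key : ∀ u ∈ Set.Icc a (a + 2 * Real.pi),
          ∑ k ∈ F, (‖Dd^[m] (deriv (Φ k)) u‖₊ : ENNReal) ≤ C := by
        intro u hu
        refine le_trans (ih hpos (fun k => deriv (Φ k)) hΦ' u F) ?_
        rw [hC]
        refine mul_le_mul_right ?_ _
        have hiter : (fun s => ∑' k, (‖deriv^[m] (deriv (Φ k)) s‖₊ : ENNReal))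
            = fun s => ∑' k, (‖deriv^[m + 1] (Φ k) s‖₊ : ENNReal) := by
          funext s
          simp only [Function.iterate_succ_apply]
        calc ∫⁻ s in Set.Icc u (u + 2 * Real.pi * m),
              ∑' k, (‖deriv^[m] (deriv (Φ k)) s‖₊ : ENNReal)
            = ∫⁻ s in Set.Icc u (u + 2 * Real.pi * m),
              ∑' k, (‖deriv^[m + 1] (Φ k) s‖₊ : ENNReal) := by rw [hiter]
          _ ≤ _ := lintegral_mono_set (by
              intro s hs
              simp only [Set.mem_Icc] at *
              constructor
              · linarith [hu.1, hs.1]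
              · nlinarith [hu.2, hs.2])
      have hmeas2 : ∀ k : Fin 3 → ℤ,
          Measurable (fun u => (‖Dd^[m] (deriv (Φ k)) u‖₊ : ENNReal)) := fun k =>
        ((contDiff_Dd_iter m (hΦ' k)).continuous.measurable).nnnorm.coe_nnreal_ennreal
      have hcast : a + 2 * Real.pi * ((m : ℕ) + 1 : ℕ) = a + 2 * Real.pi * ((m : ℝ) + 1) := by
        push_cast; ring
      rw [hcast]
      calc ∑ k ∈ F, (‖Dd^[m + 1] (Φ k) a‖₊ : ENNReal)
          = ∑ k ∈ F, (‖Dd (Dd^[m] (Φ k)) a‖₊ : ENNReal) := by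
            simp only [Function.iterate_succ_apply']
        _ ≤ ∑ k ∈ F, ∫⁻ u in Set.Icc a (a + 2 * Real.pi),
              (‖deriv (Dd^[m] (Φ k)) u‖₊ : ENNReal) :=
            Finset.sum_le_sum fun k _ => ftc_step (hΦ1 k) a
        _ = ∑ k ∈ F, ∫⁻ u in Set.Icc a (a + 2 * Real.pi),
              (‖Dd^[m] (deriv (Φ k)) u‖₊ : ENNReal) := by
            simp only [fun k : Fin 3 → ℤ => deriv_Dd_iter (ψ := Φ k) m (hdiff k)]
        _ = ∫⁻ u in Set.Icc a (a + 2 * Real.pi),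
              ∑ k ∈ F, (‖Dd^[m] (deriv (Φ k)) u‖₊ : ENNReal) :=
            (lintegral_finset_sum' F fun k _ => (hmeas2 k).aemeasurable).symm
        _ ≤ ∫⁻ _ in Set.Icc a (a + 2 * Real.pi), C :=
            setLIntegral_mono measurable_const key
        _ = C * volume (Set.Icc a (a + 2 * Real.pi)) := setLIntegral_const _ _
        _ = (ENNReal.ofReal (2 * Real.pi))^(m + 1 - 1) *
              ∫⁻ s in Set.Icc a (a + 2 * Real.pi * ((m : ℝ) + 1)),
                ∑' k, (‖deriv^[m + 1] (Φ k) s‖₊ : ENNReal) := by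
            rw [hC, Real.volume_Icc, add_sub_cancel_left, Nat.add_sub_cancel]
            have hm : (ENNReal.ofReal (2 * Real.pi))^m
                = (ENNReal.ofReal (2 * Real.pi))^(m-1) * ENNReal.ofReal (2 * Real.pi) := by
              conv_lhs => rw [← Nat.sub_add_cancel hpos]
              rw [pow_succ]
            rw [hm]
            ring



lemma contDiff_pd {n : ℕ} {H : (Fin 3 → ℝ) → ℂ} (j : Fin 3) (h : ContDiff ℝ (n + 1 : ℕ) H) :
    ContDiff ℝ (n : ℕ) (pd j H) := by
  have h' : ContDiff ℝ ((n : WithTop ℕ∞) + 1) H := by exact_mod_cast h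
  exact (ContinuousLinearMap.apply ℝ ℂ (Pi.single j 1)).contDiff.comp
    (h'.fderiv_right le_rfl)

lemma deriv_iter_neg (n : ℕ) (f : ℝ → ℂ) :
    deriv^[n] (fun s => -f s) = fun s => -(deriv^[n] f s) := by
  induction n generalizing f with
  | zero => simp
  | succ n ih =>
    rw [Function.iterate_succ_apply, Function.iterate_succ_apply]
    rw [show deriv (fun s => -f s) = fun s => -(deriv f s) from funext fun s => deriv.neg]
    exact ih (deriv f)

lemma deriv_line {H : (Fin 3 → ℝ) → ℂ} (hH : Differentiable ℝ H) (c : Fin 3 → ℝ) (j : Fin 3) :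
    deriv (fun s : ℝ => H (c - s • ej j)) = fun s => -(pd j H (c - s • ej j)) := by
  funext s
  have hline : HasDerivAt (fun s : ℝ => c - s • ej j) (-(ej j)) s := by
    simpa using (HasDerivAt.smul_const (hasDerivAt_id s) (ej j)).const_sub c
  have h2 : HasDerivAt (fun s : ℝ => H (c - s • ej j))
      ((fderiv ℝ H (c - s • ej j)) (-(ej j))) s :=
    ((hH (c - s • ej j)).hasFDerivAt.comp_hasDerivAt s hline :)
  rw [h2.deriv]
  show fderiv ℝ H (c - s • ej j) (-(ej j)) = _
  rw [map_neg]
  rfl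

lemma deriv_iter_line (n : ℕ) {H : (Fin 3 → ℝ) → ℂ} (hH : ContDiff ℝ (n : ℕ) H)
    (c : Fin 3 → ℝ) (j : Fin 3) :
    deriv^[n] (fun s : ℝ => H (c - s • ej j))
      = fun s => (-1 : ℂ)^n * (pd j)^[n] H (c - s • ej j) := by
  induction n generalizing H with
  | zero => simp
  | succ n ih =>
    have hdiff : Differentiable ℝ H := hH.differentiable (by simp)
    rw [Function.iterate_succ_apply, deriv_line hdiff c j,
      show (fun s : ℝ => -(pd j H (c - s • ej j)))
        = fun s : ℝ => -((fun s : ℝ => pd j H (c - s • ej j)) s) from rfl,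
      deriv_iter_neg, ih (contDiff_pd j hH)]
    funext s
    rw [Function.iterate_succ_apply]
    ring



def DD (j : Fin 3) (h : (Fin 3 → ℤ) → ℂ) : (Fin 3 → ℤ) → ℂ :=
  fun k => h (k - Pi.single j 1) - h k

lemma single_cast (j i : Fin 3) : (((Pi.single j (1:ℤ) : Fin 3 → ℤ) i : ℤ) : ℝ) = (Pi.single j (1:ℝ) : Fin 3 → ℝ) i := by
  rcases eq_or_ne i j with h | h
  · subst h; simp
  · simp [Pi.single_apply, h]

lemma bridge (j : Fin 3) : ∀ (n : ℕ) (G : (Fin 3 → ℝ) → ℂ) (g : (Fin 3 → ℤ) → ℂ),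
    (∀ k, G (fun i => 2 * Real.pi * (k i : ℝ)) = g k) → ∀ k,
    Dd^[n] (fun s => G ((fun i => 2 * Real.pi * (k i : ℝ)) - s • ej j)) 0
      = (DD j)^[n] g k := by
  intro n
  induction n with
  | zero =>
    intro G g hGg k
    simpa using hGg k
  | succ n ih =>
    intro G g hGg k
    set G' : (Fin 3 → ℝ) → ℂ := fun p => G (p - (2 * Real.pi) • ej j) - G p with hG'
    have hDd : Dd (fun s => G ((fun i => 2 * Real.pi * (k i : ℝ)) - s • ej j))
        = fun s => G' ((fun i => 2 * Real.pi * (k i : ℝ)) - s • ej j) := by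
      funext s
      show G ((fun i => 2 * Real.pi * (k i : ℝ)) - (s + 2 * Real.pi) • ej j)
          - G ((fun i => 2 * Real.pi * (k i : ℝ)) - s • ej j) = _
      rw [hG']
      congr 2
      rw [add_smul]
      abel
    have hcons : ∀ k' : Fin 3 → ℤ, G' (fun i => 2 * Real.pi * (k' i : ℝ)) = DD j g k' := by
      intro k'
      rw [hG']
      show G ((fun i => 2 * Real.pi * (k' i : ℝ)) - (2 * Real.pi) • ej j)
          - G (fun i => 2 * Real.pi * (k' i : ℝ)) = g (k' - Pi.single j 1) - g k'
      rw [← hGg k', ← hGg (k' - Pi.single j 1)]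
      congr 2
      funext i
      show 2 * Real.pi * (k' i : ℝ) - 2 * Real.pi * ej j i
        = 2 * Real.pi * (((k' - Pi.single j 1 : Fin 3 → ℤ) i : ℤ) : ℝ)
      have : (((k' - Pi.single j 1 : Fin 3 → ℤ) i : ℤ) : ℝ) = (k' i : ℝ) - (Pi.single j (1:ℝ) : Fin 3 → ℝ) i := by
        push_cast [← single_cast j i]
        simp
      rw [this]
      show _ = 2 * Real.pi * ((k' i : ℝ) - ej j i)
      ring
    rw [Function.iterate_succ_apply, hDd, ih G' (DD j g) hcons k,
      ← Function.iterate_succ_apply]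



section fourier
variable (j : Fin 3) (x : Fin 3 → ℝ)

noncomputable def Ee (k : Fin 3 → ℤ) : ℂ :=
  Complex.exp (Complex.I * ((2 * Real.pi * ∑ i, (k i : ℝ) * x i : ℝ) : ℂ))

lemma Ee_norm (k : Fin 3 → ℤ) : ‖Ee x k‖ = 1 := by
  rw [Ee, mul_comm, Complex.norm_exp_ofReal_mul_I]

lemma Ee_abs (k : Fin 3 → ℤ) : ‖Ee x k‖ = 1 := by
  rw [Ee_norm]

lemma Ee_shift (k : Fin 3 → ℤ) :
    Ee x (k + Pi.single j 1)
      = Complex.exp (Complex.I * ((2 * Real.pi * x j : ℝ) : ℂ)) * Ee x k := by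
  rw [Ee, Ee, ← Complex.exp_add]
  congr 1
  have hre : (2 * Real.pi * ∑ i, (((k + Pi.single j 1 : Fin 3 → ℤ) i : ℤ) : ℝ) * x i)
      = 2 * Real.pi * x j + 2 * Real.pi * ∑ i, (k i : ℝ) * x i := by
    have hsum : ∑ i, (((k + Pi.single j 1 : Fin 3 → ℤ) i : ℤ) : ℝ) * x i
        = (∑ i, (k i : ℝ) * x i) + x j := by
      have h1 : ∀ i, (((k + Pi.single j 1 : Fin 3 → ℤ) i : ℤ) : ℝ) * x i
          = (k i : ℝ) * x i + (Pi.single j (x j) : Fin 3 → ℝ) i := by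
        intro i
        rcases eq_or_ne i j with h | h
        · subst h; simp [add_mul]
        · simp [Pi.single_apply, h]
      rw [Finset.sum_congr rfl fun i _ => h1 i, Finset.sum_add_distrib,
        Finset.sum_pi_single']
      simp
    rw [hsum]
    ring
  rw [hre]
  push_cast
  ring

lemma onestep (h : (Fin 3 → ℤ) → ℂ) (hs : Summable h) :
    Summable (DD j h) ∧
      (Complex.exp (Complex.I * ((2 * Real.pi * x j : ℝ) : ℂ)) - 1) * ∑' k, h k * Ee x k
        = ∑' k, DD j h k * Ee x k := by
  have hshift : Summable (fun k => h (k - Pi.single j 1)) :=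
    hs.comp_injective (sub_left_injective (b := (Pi.single j 1 : Fin 3 → ℤ)))
  have hsn : Summable fun k => ‖h k‖ := hs.norm
  have hsE : Summable (fun k => h k * Ee x k) := by
    apply Summable.of_norm
    simpa [Ee_abs] using hsn
  have hsE' : Summable (fun k => h (k - Pi.single j 1) * Ee x k) := by
    apply Summable.of_norm
    simpa [Ee_abs] using hshift.norm
  constructor
  · exact hshift.sub hs
  · set t := Complex.exp (Complex.I * ((2 * Real.pi * x j : ℝ) : ℂ)) with ht
    have h1 : t * ∑' k, h k * Ee x k = ∑' k, h (k - Pi.single j 1) * Ee x k := by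
      rw [← tsum_mul_left]
      have h2 : ∀ k, t * (h k * Ee x k) = h k * Ee x (k + Pi.single j 1) := by
        intro k
        rw [Ee_shift]
        ring
      rw [tsum_congr h2]
      have h3 := Equiv.tsum_eq (Equiv.addRight (Pi.single j 1 : Fin 3 → ℤ))
        (fun k => h (k - Pi.single j 1) * Ee x k)
      rw [← h3]
      refine tsum_congr fun k => ?_
      simp
    rw [sub_mul, one_mul, h1, ← Summable.tsum_sub hsE' hsE]
    refine tsum_congr fun k => ?_
    rw [DD]
    ring

lemma iter_identity (g : (Fin 3 → ℤ) → ℂ) (hg : Summable g) (m : ℕ) :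
    Summable ((DD j)^[m] g) ∧
      (Complex.exp (Complex.I * ((2 * Real.pi * x j : ℝ) : ℂ)) - 1)^m * ∑' k, g k * Ee x k
        = ∑' k, (DD j)^[m] g k * Ee x k := by
  induction m with
  | zero => simpa using hg
  | succ m ih =>
    obtain ⟨hsum, hid⟩ := ih
    obtain ⟨hsum', hid'⟩ := onestep j x ((DD j)^[m] g) hsum
    constructor
    · rw [Function.iterate_succ_apply']; exact hsum'
    · calc (Complex.exp (Complex.I * ((2 * Real.pi * x j : ℝ) : ℂ)) - 1)^(m+1)
            * ∑' k, g k * Ee x k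
          = (Complex.exp (Complex.I * ((2 * Real.pi * x j : ℝ) : ℂ)) - 1) *
            ((Complex.exp (Complex.I * ((2 * Real.pi * x j : ℝ) : ℂ)) - 1)^m
              * ∑' k, g k * Ee x k) := by ring
        _ = ∑' k, (DD j)^[m+1] g k * Ee x k := by
            rw [hid, hid']
            refine tsum_congr fun k => ?_
            rw [Function.iterate_succ_apply']
end fourier



lemma norm_exp_sub_one_ge {y : ℝ} (hy : |y| ≤ 1/2) :
    4 * |y| ≤ ‖Complex.exp (Complex.I * ((2 * Real.pi * y : ℝ) : ℂ)) - 1‖ := by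
  set θ : ℝ := 2 * Real.pi * y with hθ
  set z : ℂ := Complex.exp (Complex.I * (θ : ℂ)) - 1 with hz
  have hre : z.re = Real.cos θ - 1 := by
    rw [hz, mul_comm, Complex.exp_mul_I]
    simp [Complex.cos_ofReal_re, Complex.sin_ofReal_re, Complex.cos_ofReal_im, Complex.sin_ofReal_im]
  have him : z.im = Real.sin θ := by
    rw [hz, mul_comm, Complex.exp_mul_I]
    simp [Complex.cos_ofReal_re, Complex.sin_ofReal_re, Complex.cos_ofReal_im, Complex.sin_ofReal_im]
  have hnsq : ‖z‖^2 = (Real.cos θ - 1)^2 + Real.sin θ^2 := by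
    rw [Complex.sq_norm, Complex.normSq_apply, hre, him]; ring
  have htrig : (Real.cos θ - 1)^2 + Real.sin θ^2 = 4 * Real.sin (Real.pi * y)^2 := by
    have hc : Real.cos (Real.pi * y)^2 = 1/2 + Real.cos (2 * (Real.pi * y))/2 := Real.cos_sq _
    have hs : Real.sin (Real.pi * y)^2 = 1 - Real.cos (Real.pi * y)^2 := Real.sin_sq _
    have hs2 : Real.sin θ^2 = 1 - Real.cos θ^2 := Real.sin_sq _
    have h2 : (2 : ℝ) * (Real.pi * y) = θ := by rw [hθ]; ring
    rw [h2] at hc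
    nlinarith
  have hjordan : 2 * |y| ≤ |Real.sin (Real.pi * y)| := by
    have h1 : |Real.pi * y| ≤ Real.pi / 2 := by
      rw [abs_mul, abs_of_nonneg Real.pi_pos.le]
      nlinarith [Real.pi_pos]
    have := Real.mul_abs_le_abs_sin h1
    rw [abs_mul, abs_of_nonneg Real.pi_pos.le] at this
    calc 2 * |y| = 2 / Real.pi * (Real.pi * |y|) := by
          field_simp
          try ring
      _ ≤ |Real.sin (Real.pi * y)| := this
  have hsq : (4 * |y|)^2 ≤ ‖z‖^2 := by
    rw [hnsq, htrig]
    have h2 : (2 * |y|)^2 ≤ Real.sin (Real.pi * y)^2 := by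
      rw [← sq_abs (Real.sin (Real.pi * y))]
      exact pow_le_pow_left₀ (by positivity) hjordan 2
    nlinarith
  have h4 : (0:ℝ) ≤ 4 * |y| := by positivity
  nlinarith [norm_nonneg z]



/-- Fourier-series decay from momentum-space derivatives: there is a universal
constant `c > 0` such that, for any summable `g : 2πℤ³ → ℂ`, any `C^m` extension
`G` of `g` to `ℝ³` whose `m`-th partial derivatives along direction `e_j` are
summable over the shifted lattice and integrable in the shift, any `m ≥ 1`,
`j ∈ {1,2,3}` and `x` in the unit torus,
`c^m |x_j|^m |ǧ(x)| ≤ (2π)^{m-1} ∫_0^{2πm} ∑_p |∂_{p_j}^m G(p - s e_j)| ds`. -/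
theorem fourier_decay_from_derivatives :
    ∃ c : ℝ, 0 < c ∧
      ∀ (g : (Fin 3 → ℤ) → ℂ) (G : (Fin 3 → ℝ) → ℂ) (m : ℕ) (j : Fin 3)
        (x : Fin 3 → ℝ),
        Summable g →
        (∀ k : Fin 3 → ℤ, G (fun i => 2 * Real.pi * (k i : ℝ)) = g k) →
        ContDiff ℝ m G →
        1 ≤ m →
        (∀ i, x i ∈ Set.Icc (-(1:ℝ)/2) (1/2)) →
        (∀ s : ℝ, Summable (fun k : Fin 3 → ℤ =>
          ‖(pd j)^[m] G ((fun i => 2 * Real.pi * (k i : ℝ)) - s • ej j)‖)) →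
        IntervalIntegrable (fun s : ℝ => ∑' k : Fin 3 → ℤ,
            ‖(pd j)^[m] G ((fun i => 2 * Real.pi * (k i : ℝ)) - s • ej j)‖)
          volume 0 (2 * Real.pi * m) →
        c^m * |x j|^m *
            ‖∑' k : Fin 3 → ℤ, g k *
              Complex.exp (Complex.I * ((2 * Real.pi * ∑ i, (k i : ℝ) * x i : ℝ) : ℂ))‖
          ≤ (2 * Real.pi)^(m - 1) *
            ∫ s in (0:ℝ)..(2 * Real.pi * m), ∑' k : Fin 3 → ℤ,
              ‖(pd j)^[m] G ((fun i => 2 * Real.pi * (k i : ℝ)) - s • ej j)‖ := by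
  refine ⟨4, by norm_num, ?_⟩
  intro g G m j x hg hGg hGsm hm hx hsum hInt
  have hpi : (0:ℝ) < 2 * Real.pi := by positivity
  set B : ℝ := 2 * Real.pi * m with hB
  have hB0 : 0 ≤ B := by positivity
  set fR : ℝ → ℝ := fun s => ∑' k : Fin 3 → ℤ,
    ‖(pd j)^[m] G ((fun i => 2 * Real.pi * (k i : ℝ)) - s • ej j)‖ with hfR
  set Φ : (Fin 3 → ℤ) → ℝ → ℂ :=
    fun k => fun s : ℝ => G ((fun i => 2 * Real.pi * (k i : ℝ)) - s • ej j) with hΦdef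
  have hΦ : ∀ k, ContDiff ℝ (m : ℕ) (Φ k) := by
    intro k
    exact hGsm.comp (contDiff_const.sub (contDiff_id.smul contDiff_const))
  -- identify derivatives along the line
  have hderiv : ∀ (k : Fin 3 → ℤ) (s : ℝ),
      (‖deriv^[m] (Φ k) s‖₊ : ENNReal)
        = (‖(pd j)^[m] G ((fun i => 2 * Real.pi * (k i : ℝ)) - s • ej j)‖₊ : ENNReal) := by
    intro k s
    rw [hΦdef]
    rw [deriv_iter_line m hGsm (fun i => 2 * Real.pi * (k i : ℝ)) j]
    simp
  -- pointwise identification of the ENNReal tsum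
  have hpt : ∀ s : ℝ, (∑' k : Fin 3 → ℤ, (‖deriv^[m] (Φ k) s‖₊ : ENNReal))
      = ENNReal.ofReal (fR s) := by
    intro s
    rw [tsum_congr (fun k => hderiv k s), hfR,
      ENNReal.ofReal_tsum_of_nonneg (fun k => norm_nonneg _) (hsum s)]
    exact tsum_congr fun k => (ofReal_norm_eq_enorm _).symm
  -- the integral conversion
  set I₀ : ℝ := ∫ s in Set.Ioc (0:ℝ) B, fR s with hI₀
  have hI₀nonneg : 0 ≤ I₀ := by
    rw [hI₀]
    exact setIntegral_nonneg measurableSet_Ioc fun s _ => tsum_nonneg fun k => norm_nonneg _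
  have hlint : ∫⁻ s in Set.Icc 0 (0 + B), ∑' k : Fin 3 → ℤ, (‖deriv^[m] (Φ k) s‖₊ : ENNReal)
      = ENNReal.ofReal I₀ := by
    rw [zero_add, lintegral_congr hpt, ← setLIntegral_congr Ioc_ae_eq_Icc,
      hI₀, ofReal_integral_eq_lintegral_ofReal hInt.1
        (Filter.Eventually.of_forall fun s => tsum_nonneg fun k => norm_nonneg _)]
  -- real sum bound from the ENNReal claim
  have hDsum : Summable ((DD j)^[m] g) := (iter_identity j x g hg m).1
  have hkey : ∑' k : Fin 3 → ℤ, ‖(DD j)^[m] g k‖ ≤ (2 * Real.pi)^(m - 1) * I₀ := by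
    refine Summable.tsum_le_of_sum_le hDsum.norm fun F => ?_
    have hc := claim m hm Φ hΦ 0 F
    rw [hlint] at hc
    have hre : ∀ k, Dd^[m] (Φ k) 0 = (DD j)^[m] g k := fun k => bridge j m G g hGg k
    have hc2 : ENNReal.ofReal (∑ k ∈ F, ‖(DD j)^[m] g k‖)
        ≤ ENNReal.ofReal ((2 * Real.pi)^(m - 1) * I₀) := by
      rw [ENNReal.ofReal_sum_of_nonneg fun k _ => norm_nonneg _,
        ENNReal.ofReal_mul (by positivity), ENNReal.ofReal_pow hpi.le]
      refine le_trans (le_of_eq ?_) hc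
      refine Finset.sum_congr rfl fun k _ => ?_
      rw [hre k]; exact ofReal_norm_eq_enorm _
    exact (ENNReal.ofReal_le_ofReal_iff (by positivity)).mp hc2
  -- the Fourier identity chain
  obtain ⟨-, hid⟩ := iter_identity j x g hg m
  have hxj : |x j| ≤ 1/2 := by
    have := hx j
    rw [Set.mem_Icc] at this
    rw [abs_le]
    constructor <;> linarith [this.1, this.2]
  have hjordan := norm_exp_sub_one_ge hxj
  set t : ℂ := Complex.exp (Complex.I * ((2 * Real.pi * x j : ℝ) : ℂ)) with ht
  have hnormDD : Summable fun k => ‖(DD j)^[m] g k * Ee x k‖ := by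
    simpa [Ee_abs] using hDsum.norm
  have hfinal : ∫ s in (0:ℝ)..B, fR s = I₀ := intervalIntegral.integral_of_le hB0
  calc (4:ℝ)^m * |x j|^m * ‖∑' k : Fin 3 → ℤ, g k * Ee x k‖
      = (4 * |x j|)^m * ‖∑' k : Fin 3 → ℤ, g k * Ee x k‖ := by rw [mul_pow]
    _ ≤ ‖t - 1‖^m * ‖∑' k : Fin 3 → ℤ, g k * Ee x k‖ :=
        mul_le_mul_of_nonneg_right (pow_le_pow_left₀ (by positivity) hjordan m)
          (norm_nonneg _)
    _ = ‖(t - 1)^m * ∑' k : Fin 3 → ℤ, g k * Ee x k‖ := by rw [norm_mul, norm_pow]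
    _ = ‖∑' k : Fin 3 → ℤ, (DD j)^[m] g k * Ee x k‖ := by rw [ht, hid]
    _ ≤ ∑' k : Fin 3 → ℤ, ‖(DD j)^[m] g k * Ee x k‖ := norm_tsum_le_tsum_norm hnormDD
    _ = ∑' k : Fin 3 → ℤ, ‖(DD j)^[m] g k‖ := by
        refine tsum_congr fun k => ?_
        rw [norm_mul, Ee_norm, mul_one]
    _ ≤ (2 * Real.pi)^(m - 1) * I₀ := hkey
    _ = (2 * Real.pi)^(m - 1) * ∫ s in (0:ℝ)..B, fR s := by rw [hfinal]
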